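/- Every non-negative real square matrix M has a real eigenvalue α ≥ 0 that is greater than or equal to the absolute value of every other (complex) eigenvalue of M, and which has an associated entrywise non-negative eigenvector. -/

import Mathlib

open Finset Filter Topology

private def Simp (n : ℕ) : Set (Fin n → ℝ) :=
  {x | (∀ i, 0 ≤ x i) ∧ ∑ i, x i = 1}

private lemma simp_isClosed (n : ℕ) : IsClosed (Simp n) := by
  have h1 : IsClosed {x : Fin n → ℝ | ∀ i, 0 ≤ x i} := by
    have : {x : Fin n → ℝ | ∀ i, 0 ≤ x i} = ⋂ i, {x | 0 ≤ x i} := by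
      ext x; simp [Set.mem_iInter]
    rw [this]
    exact isClosed_iInter fun i => isClosed_le continuous_const (continuous_apply i)
  have h2 : IsClosed {x : Fin n → ℝ | ∑ i, x i = 1} :=
    isClosed_eq (by continuity) continuous_const
  exact h1.inter h2

private lemma simp_isCompact (n : ℕ) : IsCompact (Simp n) := by
  refine (isCompact_closedBall (0 : Fin n → ℝ) 1).of_isClosed_subset (simp_isClosed n) ?_
  intro x hx
  rw [Metric.mem_closedBall, dist_zero_right]
  refine (pi_norm_le_iff_of_nonneg zero_le_one).2 fun i => ?_
  rw [Real.norm_eq_abs, abs_of_nonneg (hx.1 i)]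
  calc x i ≤ ∑ j, x j := Finset.single_le_sum (fun j _ => hx.1 j) (mem_univ i)
    _ = 1 := hx.2

private lemma pos_case {n : ℕ} (hn : 0 < n) (P : Matrix (Fin n) (Fin n) ℝ)
    (hP : ∀ i j, 0 < P i j) :
    ∃ t : ℝ, ∃ x : Fin n → ℝ, 0 ≤ t ∧ x ∈ Simp n ∧ P.mulVec x = t • x ∧
      ∀ s : ℝ, ∀ w : Fin n → ℝ, (∀ i, 0 ≤ w i) → w ≠ 0 →
        (∀ i, s * w i ≤ P.mulVec w i) → s ≤ t := by
  classical
  have hP0 : ∀ i j, 0 ≤ P i j := fun i j => (hP i j).le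
  set S : Set (ℝ × (Fin n → ℝ)) :=
    {p | 0 ≤ p.1 ∧ p.2 ∈ Simp n ∧ ∀ i, p.1 * p.2 i ≤ P.mulVec p.2 i} with hS
  -- nonempty
  have hx0 : (fun _ : Fin n => (n : ℝ)⁻¹) ∈ Simp n := by
    constructor
    · intro i; positivity
    · simp [Finset.sum_const]
      field_simp
  have hne : (0, fun _ : Fin n => (n : ℝ)⁻¹) ∈ S := by
    refine ⟨le_refl 0, hx0, fun i => ?_⟩
    simp only [zero_mul]
    unfold Matrix.mulVec dotProduct
    exact Finset.sum_nonneg fun j _ => mul_nonneg (hP i j).le (by positivity)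
  -- bound on t
  have hbound : ∀ p ∈ S, p.1 ≤ ∑ i, ∑ j, P i j := by
    rintro ⟨t, x⟩ ⟨ht, ⟨hxpos, hxsum⟩, hineq⟩
    have h1 : t = ∑ i, t * x i := by rw [← Finset.mul_sum, hxsum, mul_one]
    have hx1 : ∀ j, x j ≤ 1 := by
      intro j
      calc x j ≤ ∑ i, x i := Finset.single_le_sum (fun i _ => hxpos i) (mem_univ j)
        _ = 1 := hxsum
    calc t = ∑ i, t * x i := h1
      _ ≤ ∑ i, P.mulVec x i := Finset.sum_le_sum fun i _ => hineq i
      _ ≤ ∑ i, ∑ j, P i j := by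
          refine Finset.sum_le_sum fun i _ => ?_
          unfold Matrix.mulVec dotProduct
          refine Finset.sum_le_sum fun j _ => ?_
          calc P i j * x j ≤ P i j * 1 := by
                exact mul_le_mul_of_nonneg_left (hx1 j) (hP0 i j)
            _ = P i j := mul_one _
  -- S compact
  have hScompact : IsCompact S := by
    have hKc : IsCompact ((Set.Icc (0:ℝ) (∑ i, ∑ j, P i j)) ×ˢ Simp n) :=
      isCompact_Icc.prod (simp_isCompact n)
    refine hKc.of_isClosed_subset ?_ ?_
    · have hcl1 : IsClosed {p : ℝ × (Fin n → ℝ) | 0 ≤ p.1} :=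
        isClosed_le continuous_const continuous_fst
      have hcl2 : IsClosed {p : ℝ × (Fin n → ℝ) | p.2 ∈ Simp n} :=
        (simp_isClosed n).preimage continuous_snd
      have hcl3 : IsClosed {p : ℝ × (Fin n → ℝ) | ∀ i, p.1 * p.2 i ≤ P.mulVec p.2 i} := by
        have : {p : ℝ × (Fin n → ℝ) | ∀ i, p.1 * p.2 i ≤ P.mulVec p.2 i} =
            ⋂ i, {p : ℝ × (Fin n → ℝ) | p.1 * p.2 i ≤ P.mulVec p.2 i} := by
          ext p; simp [Set.mem_iInter]
        rw [this]
        refine isClosed_iInter fun i => isClosed_le ?_ ?_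
        · exact continuous_fst.mul ((continuous_apply i).comp continuous_snd)
        · unfold Matrix.mulVec dotProduct
          exact continuous_finset_sum _ fun j _ =>
            continuous_const.mul ((continuous_apply j).comp continuous_snd)
      exact hcl1.inter (hcl2.inter hcl3)
    · rintro ⟨t, x⟩ hp
      exact ⟨⟨hp.1, hbound _ hp⟩, hp.2.1⟩
  -- maximize
  obtain ⟨⟨t, x⟩, hmem, hmax⟩ :=
    hScompact.exists_isMaxOn ⟨_, hne⟩ continuous_fst.continuousOn
  obtain ⟨ht0, ⟨hxpos, hxsum⟩, hineq⟩ := hmem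
  have hmax' : ∀ q ∈ S, q.1 ≤ t := fun q hq => hmax hq
  -- positivity of z = P x
  obtain ⟨j₀, hj₀⟩ : ∃ j, 0 < x j := by
    by_contra h
    push_neg at h
    have : ∀ j, x j = 0 := fun j => le_antisymm (h j) (hxpos j)
    simp [this] at hxsum
  have hmv_pos : ∀ (w : Fin n → ℝ), (∀ i, 0 ≤ w i) → ∀ j, 0 < w j →
      ∀ i, 0 < P.mulVec w i := by
    intro w hw j hj i
    unfold Matrix.mulVec dotProduct
    have h1 : 0 < P i j * w j := mul_pos (hP i j) hj
    calc (0:ℝ) < P i j * w j := h1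
      _ ≤ ∑ k, P i k * w k :=
        Finset.single_le_sum (fun k _ => mul_nonneg (hP0 i k) (hw k)) (mem_univ j)
  have hz_pos : ∀ i, 0 < P.mulVec x i := hmv_pos x hxpos j₀ hj₀
  -- eigen equation
  have heig : P.mulVec x = t • x := by
    by_contra hne2
    obtain ⟨i₁, hi₁⟩ : ∃ i, t * x i < P.mulVec x i := by
      by_contra h
      push_neg at h
      apply hne2
      funext i
      have h2 := le_antisymm (h i) (hineq i)
      rw [Pi.smul_apply, smul_eq_mul, ← h2]
    set y : Fin n → ℝ := fun i => P.mulVec x i - t * x i with hy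
    have hypos : ∀ i, 0 ≤ y i := fun i => sub_nonneg.2 (hineq i)
    have hy₁ : 0 < y i₁ := sub_pos.2 hi₁
    have hPy_pos : ∀ i, 0 < P.mulVec y i := hmv_pos y hypos i₁ hy₁
    set z := P.mulVec x with hzdef
    have hPz : ∀ i, P.mulVec z i = t * z i + P.mulVec y i := by
      intro i
      have : z = t • x + y := by funext i; simp [hy, smul_eq_mul]
      rw [hzdef] at this ⊢
      conv_lhs => rw [this]
      rw [Matrix.mulVec_add, Matrix.mulVec_smul]
      simp [smul_eq_mul]
    haveI : Nonempty (Fin n) := Fin.pos_iff_nonempty.1 hn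
    set δ := Finset.univ.inf' Finset.univ_nonempty (fun i => P.mulVec y i / z i)
      with hδ
    have hδpos : 0 < δ := by
      rw [hδ]
      apply Finset.lt_inf'_iff .. |>.2
      intro i _
      exact div_pos (hPy_pos i) (hz_pos i)
    have hδle : ∀ i, δ * z i ≤ P.mulVec y i := by
      intro i
      have h1 : δ ≤ P.mulVec y i / z i := Finset.inf'_le _ (mem_univ i)
      exact (le_div_iff₀ (hz_pos i)).1 h1
    have hzsum : 0 < ∑ i, z i :=
      Finset.sum_pos (fun i _ => hz_pos i) ⟨j₀, mem_univ j₀⟩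
    set c := (∑ i, z i)⁻¹ with hc
    have hcpos : 0 < c := inv_pos.2 hzsum
    have hmem2 : (t + δ, c • z) ∈ S := by
      refine ⟨by positivity, ⟨fun i => ?_, ?_⟩, fun i => ?_⟩
      · simp only [Pi.smul_apply, smul_eq_mul]
        exact mul_nonneg hcpos.le (hz_pos i).le
      · simp only [Pi.smul_apply, smul_eq_mul, ← Finset.mul_sum, hc]
        field_simp
      · rw [Matrix.mulVec_smul]
        simp only [Pi.smul_apply, smul_eq_mul]
        have h2 : (t + δ) * z i ≤ P.mulVec z i := by
          rw [hPz i]; nlinarith [hδle i]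
        nlinarith [hcpos.le]
    have := hmax' _ hmem2
    simp at this
    linarith
  refine ⟨t, x, ht0, ⟨hxpos, hxsum⟩, heig, ?_⟩
  intro s w hw hw0 hsw
  rcases le_or_gt s 0 with hs | hs
  · linarith
  obtain ⟨j₁, hj₁⟩ : ∃ j, 0 < w j := by
    by_contra h
    push_neg at h
    exact hw0 (funext fun j => le_antisymm (h j) (hw j))
  have hwsum : 0 < ∑ i, w i :=
    Finset.sum_pos' (fun i _ => hw i) ⟨j₁, mem_univ j₁, hj₁⟩
  set c := (∑ i, w i)⁻¹ with hc
  have hcpos : 0 < c := inv_pos.2 hwsum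
  have : (s, c • w) ∈ S := by
    refine ⟨hs.le, ⟨fun i => mul_nonneg hcpos.le (hw i), ?_⟩, fun i => ?_⟩
    · simp only [Pi.smul_apply, smul_eq_mul, ← Finset.mul_sum, hc]
      field_simp
    · rw [Matrix.mulVec_smul]
      simp only [Pi.smul_apply, smul_eq_mul]
      nlinarith [hsw i, hcpos.le]
  exact hmax' _ this


/-- Perron–Frobenius: every non-negative real square matrix has a real eigenvalue
`α ≥ 0` that dominates the absolute value of every complex eigenvalue, and which has
an entrywise non-negative (nonzero) eigenvector. -/
theorem stmt4 {n : ℕ} (hn : 0 < n) (M : Matrix (Fin n) (Fin n) ℝ)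
    (hM : ∀ i j, 0 ≤ M i j) :
    ∃ α : ℝ, 0 ≤ α ∧
      (∃ v : Fin n → ℝ, v ≠ 0 ∧ (∀ i, 0 ≤ v i) ∧ M.mulVec v = α • v) ∧
      ∀ μ : ℂ, (∃ u : Fin n → ℂ, u ≠ 0 ∧ (M.map (Complex.ofReal ·)).mulVec u = μ • u) →
        ‖μ‖ ≤ α := by
  classical
  set P : ℕ → Matrix (Fin n) (Fin n) ℝ :=
    fun k => fun i j => M i j + ((k : ℝ) + 1)⁻¹ with hPdef
  have hPpos : ∀ k i j, 0 < P k i j := by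
    intro k i j
    have h1 := hM i j
    have h2 : (0:ℝ) < ((k:ℝ)+1)⁻¹ := by positivity
    show 0 < M i j + ((k : ℝ) + 1)⁻¹
    linarith
  have hmv : ∀ k (v : Fin n → ℝ) (i : Fin n),
      (P k).mulVec v i = M.mulVec v i + ((k:ℝ)+1)⁻¹ * ∑ j, v j := by
    intro k v i
    show (∑ j, (M i j + ((k:ℝ)+1)⁻¹) * v j) = (∑ j, M i j * v j) + ((k:ℝ)+1)⁻¹ * ∑ j, v j
    rw [Finset.mul_sum, ← Finset.sum_add_distrib]
    exact Finset.sum_congr rfl fun j _ => by ring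
  choose t x ht hx heig hCW using fun k => pos_case hn (P k) (hPpos k)
  set C := ∑ i : Fin n, ∑ j : Fin n, (M i j + 1) with hC
  have hx1 : ∀ k j, x k j ≤ 1 := by
    intro k j
    calc x k j ≤ ∑ i, x k i := Finset.single_le_sum (fun i _ => (hx k).1 i) (mem_univ j)
      _ = 1 := (hx k).2
  have htb : ∀ k, t k ≤ C := by
    intro k
    have h1 : t k = ∑ i, t k * x k i := by rw [← Finset.mul_sum, (hx k).2, mul_one]
    have h2 : ∀ i, t k * x k i = (P k).mulVec (x k) i := by
      intro i
      have h3 := congrFun (heig k) i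
      rw [Pi.smul_apply, smul_eq_mul] at h3
      exact h3.symm
    have hε : ((k:ℝ)+1)⁻¹ ≤ 1 := by
      rw [inv_le_one_iff₀]
      right
      have : (0:ℝ) ≤ (k:ℝ) := Nat.cast_nonneg k
      linarith
    calc t k = ∑ i, (P k).mulVec (x k) i := by
          rw [h1]; exact Finset.sum_congr rfl fun i _ => h2 i
      _ ≤ C := by
          rw [hC]
          refine Finset.sum_le_sum fun i _ => ?_
          unfold Matrix.mulVec dotProduct
          refine Finset.sum_le_sum fun j _ => ?_
          have h4 := hM i j
          have h5 := (hx k).1 j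
          have h6 := hx1 k j
          show (M i j + ((k : ℝ) + 1)⁻¹) * x k j ≤ M i j + 1
          nlinarith
  -- compactness
  have hKc : IsCompact ((Set.Icc (0:ℝ) C) ×ˢ Simp n) :=
    isCompact_Icc.prod (simp_isCompact n)
  have hmemK : ∀ k, (t k, x k) ∈ (Set.Icc (0:ℝ) C) ×ˢ Simp n :=
    fun k => ⟨⟨ht k, htb k⟩, hx k⟩
  obtain ⟨⟨t₀, x₀⟩, hK0, φ, hφ, hlim⟩ := hKc.tendsto_subseq hmemK
  have ht0lim : Tendsto (fun k => t (φ k)) atTop (𝓝 t₀) :=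
    (continuous_fst.tendsto _).comp hlim
  have hx0lim : ∀ j, Tendsto (fun k => x (φ k) j) atTop (𝓝 (x₀ j)) := by
    intro j
    exact (((continuous_apply j).comp continuous_snd).tendsto _).comp hlim
  have hεlim : Tendsto (fun k => ((φ k : ℝ)+1)⁻¹) atTop (𝓝 0) := by
    apply tendsto_inv_atTop_zero.comp
    exact tendsto_atTop_add_const_right _ 1
      (tendsto_natCast_atTop_atTop.comp hφ.tendsto_atTop)
  have heig0 : M.mulVec x₀ = t₀ • x₀ := by
    funext i
    have hL : Tendsto (fun k => (P (φ k)).mulVec (x (φ k)) i) atTop (𝓝 (M.mulVec x₀ i)) := by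
      have h1 : ∀ k, (P (φ k)).mulVec (x (φ k)) i = (∑ j, M i j * x (φ k) j) + ((φ k:ℝ)+1)⁻¹ := by
        intro k
        rw [hmv, (hx (φ k)).2, mul_one]
        rfl
      simp only [h1]
      have h2 : Tendsto (fun k => ∑ j, M i j * x (φ k) j) atTop (𝓝 (∑ j, M i j * x₀ j)) :=
        tendsto_finset_sum _ fun j _ => (hx0lim j).const_mul _
      have h3 := h2.add hεlim
      rw [add_zero] at h3
      convert h3 using 2
      rfl
    have hR : Tendsto (fun k => (P (φ k)).mulVec (x (φ k)) i) atTop (𝓝 (t₀ * x₀ i)) := by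
      have h1 : ∀ k, (P (φ k)).mulVec (x (φ k)) i = t (φ k) * x (φ k) i := by
        intro k
        have h3 := congrFun (heig (φ k)) i
        rw [Pi.smul_apply, smul_eq_mul] at h3
        exact h3
      simp only [h1]
      exact ht0lim.mul (hx0lim i)
    rw [Pi.smul_apply, smul_eq_mul]
    exact tendsto_nhds_unique hL hR
  refine ⟨t₀, hK0.1.1, ⟨x₀, ?_, hK0.2.1, heig0⟩, ?_⟩
  · intro h0
    have := hK0.2.2
    rw [h0] at this
    simp at this
  · rintro μ ⟨u, hu, hequ⟩
    set w : Fin n → ℝ := fun i => ‖u i‖ with hw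
    have hwpos : ∀ i, 0 ≤ w i := fun i => norm_nonneg _
    have hw0 : w ≠ 0 := by
      intro h0
      apply hu
      funext i
      have : w i = 0 := congrFun h0 i
      rw [hw] at this
      simpa using this
    have key : ∀ i, ‖μ‖ * w i ≤ M.mulVec w i := by
      intro i
      have h1 : ((M.map (Complex.ofReal ·)).mulVec u) i = μ * u i := by
        rw [hequ, Pi.smul_apply, smul_eq_mul]
      have h2 : ((M.map (Complex.ofReal ·)).mulVec u) i = ∑ j, (M i j : ℂ) * u j := by
        unfold Matrix.mulVec dotProduct Matrix.map
        rfl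
      calc ‖μ‖ * w i = ‖μ * u i‖ := by rw [hw, norm_mul]
        _ = ‖∑ j, (M i j : ℂ) * u j‖ := by rw [← h1, h2]
        _ ≤ ∑ j, ‖(M i j : ℂ) * u j‖ :=
            norm_sum_le _ _
        _ = ∑ j, M i j * w j := by
            refine Finset.sum_congr rfl fun j _ => ?_
            rw [norm_mul, Complex.norm_real, Real.norm_eq_abs, abs_of_nonneg (hM i j), hw]
        _ = M.mulVec w i := by unfold Matrix.mulVec dotProduct; rfl
    have hCWk : ∀ k, ‖μ‖ ≤ t k := by
      intro k
      refine hCW k ‖μ‖ w hwpos hw0 fun i => ?_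
      rw [hmv]
      have h5 : 0 ≤ ((k:ℝ)+1)⁻¹ * ∑ j, w j := by
        apply mul_nonneg (by positivity)
        exact Finset.sum_nonneg fun j _ => hwpos j
      linarith [key i]
    exact ge_of_tendsto' ht0lim fun k => hCWk (φ k)
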